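/- For all integers n ≥ 1 and k ≥ 0, the number of subexcedant sequences of length n and weight k equals the number of permutations π ∈ S_n with maj π = k; more precisely, the map ψ restricts to a bijection from S(k,n) onto {π ∈ S_n : maj π = k}. -/
import Mathlib


/-- `rot u k` is the permutation `[[u,k]]` of `{1,…,u} ⊆ ℕ` obtained by `k`
right circular shifts of the first `u` entries of the identity (positions are
1-based; all other natural numbers are fixed): `[[u,k]] i = u - k + i` for
`1 ≤ i ≤ k`, `[[u,k]] i = i - k` for `k < i ≤ u` and `[[u,k]] i = i` for `i > u`.
It is (junk-)defined as the identity when `¬ k < u`. -/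
def rot (u k : ℕ) : Equiv.Perm ℕ :=
  if _h : k < u then
    { toFun := fun i =>
        if 1 ≤ i ∧ i ≤ k then u - k + i
        else if k < i ∧ i ≤ u then i - k
        else i
      invFun := fun j =>
        if u - k + 1 ≤ j ∧ j ≤ u then j - (u - k)
        else if 1 ≤ j ∧ j ≤ u - k then j + k
        else j
      left_inv := by intro i; dsimp only; split_ifs <;> omega
      right_inv := by intro j; dsimp only; split_ifs <;> omega }
  else 1

/-- `psi n t = [[n, t n]] · [[n-1, t (n-1)]] · ⋯ · [[2, t 2]] · [[1, t 1]]`, where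
permutations act on indices, i.e. `(σ * τ) i = σ (τ i)`.  When `t` is a subexcedant
sequence of length `n`, `t` is called the McMahon code of the permutation `psi n t`. -/
def psi (n : ℕ) (t : ℕ → ℕ) : Equiv.Perm ℕ :=
  ((List.range n).reverse.map (fun i => rot (i + 1) (t (i + 1)))).prod

/-- `c` is a subexcedant sequence of length `n`: `0 ≤ c i ≤ i - 1` for `1 ≤ i ≤ n`
(positions are 1-based). -/
def Subexcedant (n : ℕ) (c : ℕ → ℕ) : Prop :=
  ∀ i, 1 ≤ i → i ≤ n → c i ≤ i - 1

/-- The major index of a permutation of `{1,…,n}`: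
`maj π = ∑_{1 ≤ i < n, π i > π (i+1)} i`. -/
def maj (n : ℕ) (π : Equiv.Perm ℕ) : ℕ :=
  ∑ i ∈ Finset.Ico 1 n, if π (i + 1) < π i then i else 0

lemma rot_val {u k v : ℕ} (hk : k < u) (h1 : 1 ≤ v) (h2 : v ≤ u) :
    rot u k v = if v ≤ k then u - k + v else v - k := by
  simp only [rot, dif_pos hk, Equiv.coe_fn_mk]
  split_ifs <;> omega

lemma rot_fix (u k i : ℕ) (h : i = 0 ∨ u < i) : rot u k i = i := by
  rcases Nat.lt_or_ge k u with hk | hk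
  · simp only [rot, dif_pos hk, Equiv.coe_fn_mk]
    split_ifs <;> omega
  · simp [rot, Nat.not_lt.2 hk]

lemma perm_bound {m : ℕ} {σ : Equiv.Perm ℕ} (hσ : ∀ i, i = 0 ∨ m ≤ i → σ i = i) :
    ∀ i, 1 ≤ i → i < m → 1 ≤ σ i ∧ σ i < m := by
  intro i h1 h2
  constructor
  · by_contra h
    have h0 : σ i = 0 := by omega
    have h00 : σ 0 = 0 := hσ 0 (Or.inl rfl)
    have := σ.injective (h0.trans h00.symm)
    omega
  · by_contra h
    have hf : σ (σ i) = σ i := hσ (σ i) (Or.inr (by omega))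
    have := σ.injective hf
    omega

lemma telescope (m : ℕ) (g : ℕ → ℕ) :
    ∑ i ∈ Finset.Ico 1 m, i * g (i+1) + ∑ i ∈ Finset.Ico 1 m, g i
      = ∑ i ∈ Finset.Ico 1 m, i * g i + (m - 1) * g m := by
  induction m with
  | zero => simp
  | succ m ih =>
    rcases Nat.eq_zero_or_pos m with rfl | hm
    · simp
    · rw [Finset.sum_Ico_succ_top (by omega : 1 ≤ m),
        Finset.sum_Ico_succ_top (by omega : 1 ≤ m),
        Finset.sum_Ico_succ_top (by omega : 1 ≤ m)]
      have h1 : (m + 1 - 1) * g (m+1) = m * g (m+1) := by norm_num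
      have h2 : (m - 1) * g m + g m = m * g m := by
        obtain ⟨m', rfl⟩ : ∃ m', m = m' + 1 := ⟨m - 1, by omega⟩
        simp [Nat.succ_mul]
      omega

lemma maj_rot_mul {m c : ℕ} (hc : c < m) {σ : Equiv.Perm ℕ}
    (hσ : ∀ i, i = 0 ∨ m ≤ i → σ i = i) :
    maj m (rot m c * σ) = maj m σ + c := by
  set χ : ℕ → ℕ := fun i => if σ i ≤ c then 1 else 0 with hχ
  have hσm : σ m = m := hσ m (Or.inr le_rfl)
  have key1 : ∀ i ∈ Finset.Ico 1 m,
      ((if (rot m c * σ) (i+1) < (rot m c * σ) i then i else 0) + i * χ (i+1))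
        = (if σ (i+1) < σ i then i else 0) + i * χ i := by
    intro i hi
    simp only [Finset.mem_Ico] at hi
    have ha : 1 ≤ σ i ∧ σ i < m := perm_bound hσ i hi.1 hi.2
    have hb : 1 ≤ σ (i+1) ∧ σ (i+1) ≤ m := by
      rcases Nat.lt_or_ge (i+1) m with h | h
      · have := perm_bound hσ (i+1) (by omega) h; omega
      · have he : i + 1 = m := by omega
        rw [he, hσm]; omega
    have hab : σ i ≠ σ (i+1) := fun h => by
      have := σ.injective h; omega
    simp only [Equiv.Perm.mul_apply]
    simp only [rot_val hc hb.1 hb.2, rot_val hc ha.1 (by omega), hχ]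
    split_ifs <;> omega
  have hsum1 : (∑ i ∈ Finset.Ico 1 m, if (rot m c * σ) (i+1) < (rot m c * σ) i then i else 0)
      + ∑ i ∈ Finset.Ico 1 m, i * χ (i+1)
      = (∑ i ∈ Finset.Ico 1 m, if σ (i+1) < σ i then i else 0)
        + ∑ i ∈ Finset.Ico 1 m, i * χ i := by
    rw [← Finset.sum_add_distrib, ← Finset.sum_add_distrib]
    exact Finset.sum_congr rfl key1
  have htel := telescope m χ
  have hχm : χ m = 0 := by simp only [hχ]; rw [if_neg (by omega)]
  have hχsum : ∑ i ∈ Finset.Ico 1 m, χ i = c := by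
    have hb : ∑ i ∈ Finset.Ico 1 m, χ i
        = ∑ j ∈ Finset.Ico 1 m, (if j ≤ c then (1:ℕ) else 0) := by
      apply Finset.sum_nbij' (fun i => σ i) (fun j => σ.symm j)
      · intro a ha
        simp only [Finset.mem_Ico] at ha ⊢
        exact perm_bound hσ a ha.1 ha.2
      · intro a ha
        simp only [Finset.mem_Ico] at ha ⊢
        have hσ' : ∀ i, i = 0 ∨ m ≤ i → σ.symm i = i := by
          intro i hi
          have h1 := hσ i hi
          conv_lhs => rw [← h1]
          exact σ.symm_apply_apply i
        exact perm_bound hσ' a ha.1 ha.2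
      · intro a _; exact σ.symm_apply_apply a
      · intro a _; exact σ.apply_symm_apply a
      · intro a _; rfl
    rw [hb, Finset.sum_boole]
    have : Finset.filter (fun j => j ≤ c) (Finset.Ico 1 m) = Finset.Ico 1 (c+1) := by
      ext j; simp only [Finset.mem_filter, Finset.mem_Ico]; omega
    rw [this]
    simp
  rw [hχm, Nat.mul_zero, Nat.add_zero] at htel
  show (∑ i ∈ Finset.Ico 1 m, if (rot m c * σ) (i+1) < (rot m c * σ) i then i else 0)
      = (∑ i ∈ Finset.Ico 1 m, if σ (i+1) < σ i then i else 0) + c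
  omega

lemma psi_succ (n : ℕ) (t : ℕ → ℕ) :
    psi (n+1) t = rot (n+1) (t (n+1)) * psi n t := by
  simp [psi, List.range_succ]

lemma psi_fix (n : ℕ) (t : ℕ → ℕ) (i : ℕ) (h : i = 0 ∨ n < i) : psi n t i = i := by
  induction n with
  | zero => simp [psi]
  | succ n ih =>
    rw [psi_succ]
    simp only [Equiv.Perm.mul_apply]
    rw [ih (by omega), rot_fix _ _ _ (by omega)]

lemma psi_congr {n : ℕ} {s t : ℕ → ℕ} (h : ∀ i, 1 ≤ i → i ≤ n → s i = t i) :
    psi n s = psi n t := by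
  unfold psi
  congr 1
  apply List.map_congr_left
  intro i hi
  rw [List.mem_reverse, List.mem_range] at hi
  rw [h (i+1) (by omega) (by omega)]

lemma maj_psi (n : ℕ) (t : ℕ → ℕ) (ht : Subexcedant n t) :
    maj n (psi n t) = ∑ i ∈ Finset.Icc 1 n, t i := by
  induction n with
  | zero => simp [maj]
  | succ n ih =>
    have hc : t (n+1) ≤ n := by have := ht (n+1) (by omega) le_rfl; omega
    have hσ : ∀ i, i = 0 ∨ n+1 ≤ i → psi n t i = i := fun i hi => psi_fix n t i (by omega)
    rw [psi_succ, maj_rot_mul (by omega : t (n+1) < n+1) hσ]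
    have h2 : maj (n+1) (psi n t) = maj n (psi n t) := by
      unfold maj
      rcases Nat.eq_zero_or_pos n with rfl | hn
      · simp
      · rw [Finset.sum_Ico_succ_top (by omega : 1 ≤ n)]
        have he : psi n t (n+1) = n+1 := psi_fix _ _ _ (by omega)
        have hbnd := perm_bound hσ n hn (by omega)
        rw [he, if_neg (by omega), add_zero]
    rw [h2, ih (fun i h1 h2 => ht i h1 (by omega)),
      Finset.sum_Icc_succ_top (by omega : 1 ≤ n+1)]

lemma rot_top {u k : ℕ} (hk : k < u) (hu : 1 ≤ u) : rot u k u = u - k := by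
  rw [rot_val hk hu le_rfl, if_neg (by omega)]

lemma trunc_mem {n : ℕ} {u : ℕ → ℕ} (hu : Subexcedant (n+1) u)
    (hu0 : u 0 = 0) :
    Subexcedant n (fun i => if i ≤ n then u i else 0) ∧
      ∀ i, i = 0 ∨ n < i → (if i ≤ n then u i else 0) = 0 := by
  constructor
  · intro i h1 h2
    simp only [if_pos h2]
    exact hu i h1 (by omega)
  · intro i hi
    rcases hi with rfl | hi
    · simpa using hu0
    · rw [if_neg (by omega)]

lemma psi_inj (n : ℕ) : ∀ s t : ℕ → ℕ,
    (Subexcedant n s ∧ ∀ i, i = 0 ∨ n < i → s i = 0) →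
    (Subexcedant n t ∧ ∀ i, i = 0 ∨ n < i → t i = 0) →
    psi n s = psi n t → s = t := by
  induction n with
  | zero =>
    intro s t hs ht _
    funext i
    rw [hs.2 i (by omega), ht.2 i (by omega)]
  | succ n ih =>
    intro s t hs ht h
    have hcs : s (n+1) ≤ n := by have := hs.1 (n+1) (by omega) le_rfl; omega
    have hct : t (n+1) ≤ n := by have := ht.1 (n+1) (by omega) le_rfl; omega
    have htop : s (n+1) = t (n+1) := by
      have e1 : psi (n+1) s (n+1) = (n+1) - s (n+1) := by
        rw [psi_succ, Equiv.Perm.mul_apply, psi_fix n s (n+1) (by omega),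
          rot_top (by omega) (by omega)]
      have e2 : psi (n+1) t (n+1) = (n+1) - t (n+1) := by
        rw [psi_succ, Equiv.Perm.mul_apply, psi_fix n t (n+1) (by omega),
          rot_top (by omega) (by omega)]
      rw [h] at e1
      omega
    have hc : psi n s = psi n t := by
      have h' := h
      rw [psi_succ, psi_succ, htop] at h'
      exact mul_left_cancel h'
    have hs' := trunc_mem hs.1 (hs.2 0 (Or.inl rfl))
    have ht' := trunc_mem ht.1 (ht.2 0 (Or.inl rfl))
    have hps : psi n (fun i => if i ≤ n then s i else 0) = psi n s :=
      psi_congr (fun i _ h2 => by rw [if_pos h2])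
    have hpt : psi n (fun i => if i ≤ n then t i else 0) = psi n t :=
      psi_congr (fun i _ h2 => by rw [if_pos h2])
    have heq := ih _ _ hs' ht' (by rw [hps, hpt, hc])
    funext i
    rcases Nat.lt_or_ge n i with hi | hi
    · rcases Nat.eq_or_lt_of_le hi with rfl | hi'
      · exact htop
      · rw [hs.2 i (by omega), ht.2 i (by omega)]
    · have := congrFun heq i
      simpa [if_pos hi] using this

lemma psi_surj (n : ℕ) : ∀ π : Equiv.Perm ℕ, (∀ i, i = 0 ∨ n < i → π i = i) →
    ∃ t, (Subexcedant n t ∧ (∀ i, i = 0 ∨ n < i → t i = 0)) ∧ psi n t = π := by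
  induction n with
  | zero =>
    intro π hπ
    refine ⟨fun _ => 0, ⟨fun i h1 h2 => by omega, fun _ _ => rfl⟩, ?_⟩
    have : π = 1 := Equiv.ext fun i => hπ i (by omega)
    rw [this]
    simp [psi]
  | succ n ih =>
    intro π hπ
    have hπ' : ∀ i, i = 0 ∨ n+2 ≤ i → π i = i := fun i hi => hπ i (by omega)
    have hbnd := perm_bound hπ' (n+1) (by omega) (by omega)
    set c := (n+1) - π (n+1) with hcdef
    have hc : c ≤ n := by omega
    have hrot : rot (n+1) c (n+1) = n+1 - c := rot_top (by omega) (by omega)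
    have hval : π (n+1) = n+1 - c := by omega
    set σ := (rot (n+1) c)⁻¹ * π with hσdef
    have hσfix : ∀ i, i = 0 ∨ n < i → σ i = i := by
      intro i hi
      rcases hi with rfl | hi
      · have h0 : π 0 = 0 := hπ 0 (Or.inl rfl)
        have r0 : rot (n+1) c 0 = 0 := rot_fix _ _ _ (Or.inl rfl)
        simp only [hσdef, Equiv.Perm.mul_apply, h0]
        conv_lhs => rw [← r0]
        simp
      · rcases Nat.eq_or_lt_of_le hi with rfl | hi'
        · simp only [hσdef, Equiv.Perm.mul_apply, hval]
          conv_lhs => rw [← hrot]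
          simp
        · have hπi : π i = i := hπ i (by omega)
          have ri : rot (n+1) c i = i := rot_fix _ _ _ (by omega)
          simp only [hσdef, Equiv.Perm.mul_apply, hπi]
          conv_lhs => rw [← ri]
          simp
    obtain ⟨s, ⟨hs1, hs2⟩, hs3⟩ := ih σ hσfix
    refine ⟨fun i => if i = n+1 then c else s i, ⟨?_, ?_⟩, ?_⟩
    · intro i h1 h2
      dsimp only
      by_cases hi : i = n+1
      · subst hi; simpa using hc
      · rw [if_neg hi]
        exact hs1 i h1 (by omega)
    · intro i hi
      dsimp only
      rcases hi with rfl | hi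
      · rw [if_neg (by omega)]; exact hs2 0 (Or.inl rfl)
      · rw [if_neg (by omega)]; exact hs2 i (Or.inr (by omega))
    · rw [psi_succ]
      have hp2 : psi n (fun i => if i = n+1 then c else s i) = psi n s :=
        psi_congr (fun i _ h2 => by rw [if_neg (by omega)])
      rw [if_pos rfl, hp2, hs3, hσdef, mul_inv_cancel_left]

/-- for `n ≥ 1` and `k ≥ 0`, the map `ψ` restricts to a bijection
from `S(k,n)` (subexcedant sequences of length `n` and weight `k`, encoded as
functions vanishing outside positions `1,…,n`) onto the set of permutations
`π ∈ S_n` with `maj π = k`; in particular the two sets have the same number of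
elements. -/
theorem psi_bijOn_fixed_weight (n k : ℕ) (hn : 1 ≤ n) :
    Set.BijOn (psi n)
      {c : ℕ → ℕ | Subexcedant n c ∧ (∀ i, i = 0 ∨ n < i → c i = 0) ∧
        ∑ i ∈ Finset.Icc 1 n, c i = k}
      {π : Equiv.Perm ℕ | (∀ i, i = 0 ∨ n < i → π i = i) ∧ maj n π = k} ∧
    {c : ℕ → ℕ | Subexcedant n c ∧ (∀ i, i = 0 ∨ n < i → c i = 0) ∧
        ∑ i ∈ Finset.Icc 1 n, c i = k}.ncard =
      {π : Equiv.Perm ℕ | (∀ i, i = 0 ∨ n < i → π i = i) ∧ maj n π = k}.ncard := by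
  have hbij : Set.BijOn (psi n)
      {c : ℕ → ℕ | Subexcedant n c ∧ (∀ i, i = 0 ∨ n < i → c i = 0) ∧
        ∑ i ∈ Finset.Icc 1 n, c i = k}
      {π : Equiv.Perm ℕ | (∀ i, i = 0 ∨ n < i → π i = i) ∧ maj n π = k} := by
    refine ⟨?_, ?_, ?_⟩
    · intro t ht
      exact ⟨fun i hi => psi_fix n t i hi, by rw [maj_psi n t ht.1]; exact ht.2.2⟩
    · intro s hs t ht h
      exact psi_inj n s t ⟨hs.1, hs.2.1⟩ ⟨ht.1, ht.2.1⟩ h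
    · intro π hπ
      obtain ⟨t, ⟨h1, h2⟩, h3⟩ := psi_surj n π hπ.1
      refine ⟨t, ⟨h1, h2, ?_⟩, h3⟩
      rw [← hπ.2, ← h3, maj_psi n t h1]
  exact ⟨hbij, by rw [← hbij.image_eq, Set.ncard_image_of_injOn hbij.injOn]⟩
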